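/- Let m, m' ∈ ℕ and let X be an m'-negligible metric space. Then ℝ^m × X, equipped with the product metric (the sup metric of the Euclidean metric on ℝ^m and the metric on X, which is bi-Lipschitz equivalent to every p-product metric for p ∈ [1,∞)), is (m+m')-negligible: its (m+m')-dimensional Hausdorff measure vanishes. -/

import Mathlib

open Set MeasureTheory
open scoped ENNReal NNReal Topology

lemma cube_diam (m : ℕ) (a : Fin m → ℝ) (c : ℝ) (hc : 0 ≤ c) :
    EMetric.diam {x : EuclideanSpace ℝ (Fin m) | ∀ i, x i ∈ Set.Icc (a i) (a i + c)} ≤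
      ENNReal.ofReal (c * Real.sqrt m) := by
  apply EMetric.diam_le
  intro x hx y hy
  rw [edist_dist]
  apply ENNReal.ofReal_le_ofReal
  rw [EuclideanSpace.dist_eq]
  have h1 : ∀ i, dist (x i) (y i) ^ 2 ≤ c ^ 2 := by
    intro i
    have h := Real.dist_le_of_mem_Icc (hx i) (hy i)
    rw [add_sub_cancel_left] at h
    exact pow_le_pow_left₀ dist_nonneg h 2
  calc Real.sqrt (∑ i, dist (x i) (y i) ^ 2)
      ≤ Real.sqrt (∑ _i : Fin m, c ^ 2) :=
        Real.sqrt_le_sqrt (Finset.sum_le_sum fun i _ => h1 i)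
    _ = Real.sqrt ((m : ℝ) * c ^ 2) := by
        rw [Finset.sum_const, Finset.card_univ, Fintype.card_fin, nsmul_eq_mul]
    _ = c * Real.sqrt m := by
        rw [Real.sqrt_mul (Nat.cast_nonneg m), Real.sqrt_sq hc, mul_comm]

lemma cube_cover (m : ℕ) (R c : ℝ) (hc : 0 < c) :
    Metric.closedBall (0 : EuclideanSpace ℝ (Fin m)) R ⊆
      ⋃ k : Fin m → Fin (⌈2 * R / c⌉₊ + 1),
        {x | ∀ i, x i ∈ Set.Icc ((k i : ℝ) * c - R) ((k i : ℝ) * c - R + c)} := by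
  intro x hx
  have hxi : ∀ i, |x i| ≤ R := by
    intro i
    have hx' : dist x 0 ≤ R := Metric.mem_closedBall.mp hx
    have h2 : dist (x i) 0 ≤ dist x 0 := by
      rw [EuclideanSpace.dist_eq]
      have hle : dist (x i) ((0 : EuclideanSpace ℝ (Fin m)) i) ^ 2 ≤
          ∑ j, dist (x j) ((0 : EuclideanSpace ℝ (Fin m)) j) ^ 2 :=
        Finset.single_le_sum
          (f := fun j => dist (x j) ((0 : EuclideanSpace ℝ (Fin m)) j) ^ 2)
          (fun j _ => sq_nonneg _) (Finset.mem_univ i)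
      calc dist (x i) ((0 : EuclideanSpace ℝ (Fin m)) i)
          = Real.sqrt (dist (x i) ((0 : EuclideanSpace ℝ (Fin m)) i) ^ 2) :=
            (Real.sqrt_sq dist_nonneg).symm
        _ ≤ _ := Real.sqrt_le_sqrt hle
    rw [Real.dist_0_eq_abs] at h2
    exact h2.trans hx'
  set K := ⌈2 * R / c⌉₊ + 1 with hK
  have hKpos : 0 < K := Nat.succ_pos _
  have main : ∀ i, ∃ j : Fin K, x i ∈ Set.Icc ((j : ℝ) * c - R) ((j : ℝ) * c - R + c) := by
    intro i
    set y := x i + R with hy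
    have hy0 : 0 ≤ y := by have := (abs_le.mp (hxi i)).1; simp only [hy]; linarith
    set j : ℕ := min ⌊y / c⌋₊ (K - 1) with hj
    have hjlt : j < K := lt_of_le_of_lt (min_le_right _ _) (Nat.sub_lt hKpos one_pos)
    have hfloor : (⌊y / c⌋₊ : ℝ) * c ≤ y := by
      have h := Nat.floor_le (div_nonneg hy0 hc.le)
      calc (⌊y / c⌋₊ : ℝ) * c ≤ (y / c) * c := by nlinarith
        _ = y := div_mul_cancel₀ _ hc.ne'
    have hlow : (j : ℝ) * c ≤ y := by
      have hle : (j : ℝ) ≤ ⌊y / c⌋₊ := by exact_mod_cast min_le_left _ _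
      nlinarith
    have hup : y ≤ ((j : ℝ) + 1) * c := by
      rcases le_or_gt ⌊y / c⌋₊ (K - 1) with h | h
      · have hjeq : j = ⌊y / c⌋₊ := min_eq_left h
        have hfl := Nat.lt_floor_add_one (y / c)
        rw [hjeq]
        calc y = (y / c) * c := (div_mul_cancel₀ _ hc.ne').symm
          _ ≤ ((⌊y / c⌋₊ : ℝ) + 1) * c := by nlinarith
      · have hjeq : j = K - 1 := min_eq_right h.le
        have hK1 : K - 1 = ⌈2 * R / c⌉₊ := by omega
        have hceil : 2 * R / c ≤ (⌈2 * R / c⌉₊ : ℝ) := Nat.le_ceil _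
        have hy2R : y ≤ 2 * R := by have := (abs_le.mp (hxi i)).2; simp only [hy]; linarith
        have hb : y ≤ ((⌈2 * R / c⌉₊ : ℝ)) * c := by
          calc y ≤ 2 * R := hy2R
            _ = (2 * R / c) * c := (div_mul_cancel₀ _ hc.ne').symm
            _ ≤ _ := by nlinarith
        rw [hjeq, hK1]
        nlinarith [Nat.cast_nonneg (α := ℝ) ⌈2 * R / c⌉₊]
    refine ⟨⟨j, hjlt⟩, ?_⟩
    simp only [Set.mem_Icc, Fin.val_mk]
    constructor
    · simp only [hy] at hlow; linarith
    · simp only [hy] at hup; linarith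
  choose k hk using main
  exact mem_iUnion.mpr ⟨k, hk⟩

lemma prod_diam_le {α β : Type*} [PseudoEMetricSpace α] [PseudoEMetricSpace β] (s : Set α) (t : Set β) :
    EMetric.diam (s ×ˢ t) ≤ max (EMetric.diam s) (EMetric.diam t) := by
  apply EMetric.diam_le
  rintro ⟨a, b⟩ ⟨ha, hb⟩ ⟨a', b'⟩ ⟨ha', hb'⟩
  rw [Prod.edist_eq]
  exact max_le_max (EMetric.edist_le_diam_of_mem ha ha') (EMetric.edist_le_diam_of_mem hb hb')

lemma alg1 (P Q cc : ℝ≥0∞) (hc0 : cc ≠ 0) (hctop : cc ≠ ⊤) (hQ : Q ≠ ⊤) (m m' : ℕ) :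
    (P / cc) ^ (m : ℝ) * (cc * Q) ^ ((m : ℝ) + (m' : ℝ)) =
      P ^ (m : ℝ) * Q ^ ((m : ℝ) + (m' : ℝ)) * cc ^ (m' : ℝ) := by
  rw [ENNReal.div_rpow_of_nonneg _ _ (Nat.cast_nonneg m),
    ENNReal.mul_rpow_of_ne_top hctop hQ,
    ENNReal.rpow_add _ _ hc0 hctop, div_eq_mul_inv]
  have h1 : cc ^ (m : ℝ) ≠ 0 := (ENNReal.rpow_pos (pos_iff_ne_zero.mpr hc0) hctop).ne'
  have h2 : cc ^ (m : ℝ) ≠ ⊤ := ENNReal.rpow_ne_top_of_nonneg (Nat.cast_nonneg m) hctop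
  calc P ^ (m:ℝ) * (cc ^ (m:ℝ))⁻¹ * (cc ^ (m:ℝ) * cc ^ (m':ℝ) * Q ^ ((m:ℝ)+(m':ℝ)))
      = P ^ (m:ℝ) * Q ^ ((m:ℝ)+(m':ℝ)) * cc ^ (m':ℝ) * ((cc ^ (m:ℝ))⁻¹ * cc ^ (m:ℝ)) := by
        ring
    _ = _ := by rw [ENNReal.inv_mul_cancel h1 h2, mul_one]

/-- A metric space is `s`-negligible iff its `s`-dimensional Hausdorff measure
(w.r.t. the Borel σ-algebra) vanishes. -/
def IsNegligibleSpace (X : Type*) [MetricSpace X] (s : ℝ) : Prop :=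
  letI := borel X
  letI : BorelSpace X := ⟨rfl⟩
  μH[s] (Set.univ : Set X) = 0

/-- **Negligibility and product with `ℝ^m`.** If `X` is an `m'`-negligible metric space,
then `ℝ^m × X` (with the sup product metric of the Euclidean metric on `ℝ^m` and the
metric of `X`) is `(m + m')`-negligible. -/
theorem product_with_Rm_negligible (m m' : ℕ) (X : Type*) [MetricSpace X]
    (hX : IsNegligibleSpace X m') :
    IsNegligibleSpace (EuclideanSpace ℝ (Fin m) × X) (m + m') := by
  classical
  unfold IsNegligibleSpace at hX ⊢
  letI : MeasurableSpace X := borel X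
  haveI : BorelSpace X := ⟨rfl⟩
  letI : MeasurableSpace (EuclideanSpace ℝ (Fin m) × X) := borel _
  haveI : BorelSpace (EuclideanSpace ℝ (Fin m) × X) := ⟨rfl⟩
  rcases Nat.eq_zero_or_pos m' with hm' | hm'
  · -- degenerate case : `X` must be empty
    subst hm'
    rw [Nat.cast_zero] at hX
    haveI hXe : IsEmpty X := by
      by_contra h
      rw [not_isEmpty_iff] at h
      obtain ⟨x⟩ := h
      have h1 : (1 : ℝ≥0∞) ≤ μH[(0:ℝ)] (univ : Set X) := by
        rw [← Measure.hausdorffMeasure_zero_singleton x]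
        exact measure_mono (subset_univ _)
      rw [hX] at h1
      simp at h1
    have huniv : (univ : Set (EuclideanSpace ℝ (Fin m) × X)) = ∅ :=
      Set.univ_eq_empty_iff.mpr inferInstance
    rw [huniv, measure_empty]
  -- main case
  set d : ℝ := (m : ℝ) + (m' : ℝ) with hd
  have hd0 : 0 ≤ d := by rw [hd]; positivity
  have hm'0 : (0:ℝ) < (m' : ℝ) := by exact_mod_cast hm'
  have hhalf0 : (2⁻¹ : ℝ≥0∞) ≠ 0 := ENNReal.inv_ne_zero.mpr ENNReal.ofNat_ne_top
  have hhalftop : (2⁻¹ : ℝ≥0∞) ≠ ⊤ := ENNReal.inv_ne_top.mpr (by norm_num)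
  have hhalfle1 : (2⁻¹ : ℝ≥0∞) ≤ 1 := ENNReal.inv_le_one.mpr ENNReal.one_lt_two.le
  have hhalflt1 : (2⁻¹ : ℝ≥0∞) < 1 := ENNReal.inv_lt_one.mpr ENNReal.one_lt_two
  rw [Measure.hausdorffMeasure_apply] at hX
  -- extract good covers of `X` from `hX`
  have hq : ∀ (ε : ℝ≥0∞), ε ≠ 0 → ∀ q : ℕ, ∃ t : ℕ → Set X,
      (univ ⊆ ⋃ n, t n) ∧ (∀ n, EMetric.diam (t n) ≤ 2⁻¹ ^ q) ∧
        ∑' n, EMetric.diam (t n) ^ (m' : ℝ) < ε := by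
    intro ε hε q
    have h0 : (⨅ (t : ℕ → Set X) (_ : univ ⊆ ⋃ n, t n)
        (_ : ∀ n, EMetric.diam (t n) ≤ (2⁻¹ : ℝ≥0∞) ^ q),
        ∑' n, ⨆ _ : (t n).Nonempty, EMetric.diam (t n) ^ (m' : ℝ)) = 0 := by
      refine le_antisymm ?_ zero_le
      rw [← hX]
      exact le_iSup₂ (f := fun (r : ℝ≥0∞) (_ : 0 < r) =>
        ⨅ (t : ℕ → Set X) (_ : univ ⊆ ⋃ n, t n) (_ : ∀ n, EMetric.diam (t n) ≤ r),
          ∑' n, ⨆ _ : (t n).Nonempty, EMetric.diam (t n) ^ (m' : ℝ))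
        ((2⁻¹ : ℝ≥0∞) ^ q) (pos_iff_ne_zero.mpr (pow_ne_zero q hhalf0))
    have h1 := h0.trans_lt (pos_iff_ne_zero.mpr hε)
    simp only [iInf_lt_iff] at h1
    obtain ⟨t, ht1, ht2, ht3⟩ := h1
    refine ⟨t, ht1, ht2, ?_⟩
    have heq : ∀ n, EMetric.diam (t n) ^ (m' : ℝ) =
        ⨆ _ : (t n).Nonempty, EMetric.diam (t n) ^ (m' : ℝ) := by
      intro n
      rcases eq_empty_or_nonempty (t n) with h | h
      · simp [h, ENNReal.zero_rpow_of_pos hm'0, EMetric.diam, hm'.ne']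
      · rw [iSup_pos h]
    exact lt_of_eq_of_lt (tsum_congr heq) ht3
  -- vanishing on each slab `closedBall 0 R ×ˢ univ`
  have key : ∀ (R : ℝ), 0 ≤ R → μH[d]
      ((Metric.closedBall (0 : EuclideanSpace ℝ (Fin m)) R) ×ˢ (univ : Set X)) = 0 := by
    intro R hR
    set Q : ℝ≥0∞ := ENNReal.ofReal (Real.sqrt m + 1) with hQdef
    have hQtop : Q ≠ ⊤ := ENNReal.ofReal_ne_top
    have hQ1 : 1 ≤ Q := by
      rw [hQdef, show (1:ℝ≥0∞) = ENNReal.ofReal 1 by simp]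
      exact ENNReal.ofReal_le_ofReal (by nlinarith [Real.sqrt_nonneg (m:ℝ)])
    set P : ℝ≥0∞ := ENNReal.ofReal (2 * R + 2) with hPdef
    have hPtop : P ≠ ⊤ := ENNReal.ofReal_ne_top
    set C : ℝ≥0∞ := P ^ (m:ℝ) * Q ^ d * 3 with hCdef
    have hCtop : C ≠ ⊤ := by
      refine ENNReal.mul_ne_top (ENNReal.mul_ne_top ?_ ?_) (by norm_num)
      exacts [ENNReal.rpow_ne_top_of_nonneg (Nat.cast_nonneg m) hPtop,
        ENNReal.rpow_ne_top_of_nonneg hd0 hQtop]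
    have key2 : ∀ (ε : ℝ≥0∞), ε ≠ 0 → ε ≠ ⊤ →
        μH[d] ((Metric.closedBall (0 : EuclideanSpace ℝ (Fin m)) R) ×ˢ (univ : Set X))
          ≤ C * ε := by
      intro ε hε0 hεtop
      choose t hcov hdiam hsum using hq ε hε0
      set γ : ℕ → ℕ → ℝ≥0∞ :=
        fun q n => min ((ε * 2⁻¹ ^ n) ^ (1 / (m' : ℝ))) (2⁻¹ ^ q) with hγdef
      have hγ0 : ∀ q n, γ q n ≠ 0 := by
        intro q n
        have hbase0 : (ε * 2⁻¹ ^ n) ≠ 0 := mul_ne_zero hε0 (pow_ne_zero n hhalf0)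
        have hbasetop : (ε * 2⁻¹ ^ n) ≠ ⊤ :=
          ENNReal.mul_ne_top hεtop (ENNReal.pow_ne_top hhalftop)
        simp only [hγdef]
        exact (lt_min (ENNReal.rpow_pos (pos_iff_ne_zero.mpr hbase0) hbasetop)
          (pos_iff_ne_zero.mpr (pow_ne_zero q hhalf0))).ne'
      set cc : ℕ → ℕ → ℝ≥0∞ :=
        fun q n => max (EMetric.diam (t q n)) (γ q n) with hccdef
      have hccle : ∀ q n, cc q n ≤ 2⁻¹ ^ q := by
        intro q n
        simp only [hccdef, hγdef]
        exact max_le (hdiam q n) (min_le_right _ _)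
      have hcc0 : ∀ q n, cc q n ≠ 0 := by
        intro q n
        refine (lt_of_lt_of_le (pos_iff_ne_zero.mpr (hγ0 q n)) ?_).ne'
        simp only [hccdef]
        exact le_max_right _ _
      have hcctop : ∀ q n, cc q n ≠ ⊤ :=
        fun q n => ne_top_of_le_ne_top (ENNReal.pow_ne_top hhalftop) (hccle q n)
      have hccle1 : ∀ q n, cc q n ≤ 1 :=
        fun q n => (hccle q n).trans (pow_le_one₀ zero_le hhalfle1)
      have hcrealpos : ∀ q n, 0 < (cc q n).toReal :=
        fun q n => ENNReal.toReal_pos (hcc0 q n) (hcctop q n)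
      have hcrealle1 : ∀ q n, (cc q n).toReal ≤ 1 := by
        intro q n
        have := ENNReal.toReal_mono (by norm_num : (1:ℝ≥0∞) ≠ ⊤) (hccle1 q n)
        simpa using this
      have hofReal : ∀ q n, ENNReal.ofReal ((cc q n).toReal) = cc q n :=
        fun q n => ENNReal.ofReal_toReal (hcctop q n)
      set K : ℕ → ℕ → ℕ := fun q n => ⌈2 * R / (cc q n).toReal⌉₊ + 1 with hKdef
      set u : ∀ _q : ℕ, (Σ _n : ℕ, (Fin m → Fin (K _q _n))) →
          Set (EuclideanSpace ℝ (Fin m) × X) := fun q p =>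
        {x : EuclideanSpace ℝ (Fin m) | ∀ i, x i ∈
          Set.Icc ((p.2 i : ℝ) * (cc q p.1).toReal - R)
            ((p.2 i : ℝ) * (cc q p.1).toReal - R + (cc q p.1).toReal)} ×ˢ t q p.1
        with hudef
      have hdiam_u : ∀ q n (k : Fin m → Fin (K q n)),
          EMetric.diam (u q ⟨n, k⟩) ≤ cc q n * Q := by
        intro q n k
        simp only [hudef]
        refine (prod_diam_le _ _).trans (max_le ?_ ?_)
        · refine (cube_diam m _ _ (hcrealpos q n).le).trans ?_
          rw [ENNReal.ofReal_mul (hcrealpos q n).le, hofReal q n]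
          refine mul_le_mul_right (ENNReal.ofReal_le_ofReal ?_) _
          nlinarith [Real.sqrt_nonneg (m:ℝ)]
        · calc EMetric.diam (t q n) ≤ cc q n := by
                simp only [hccdef]; exact le_max_left _ _
            _ = cc q n * 1 := (mul_one _).symm
            _ ≤ cc q n * Q := mul_le_mul_right hQ1 _
      have hcover_u : ∀ q,
          (Metric.closedBall (0 : EuclideanSpace ℝ (Fin m)) R ×ˢ (univ : Set X)) ⊆
            ⋃ p, u q p := by
        rintro q ⟨x, y⟩ ⟨hx, -⟩
        obtain ⟨n, hn⟩ : ∃ n, y ∈ t q n := by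
          have h := hcov q (mem_univ y)
          rwa [mem_iUnion] at h
        obtain ⟨k, hk⟩ := mem_iUnion.mp (cube_cover m R _ (hcrealpos q n) hx)
        exact mem_iUnion.mpr ⟨⟨n, k⟩, hk, hn⟩
      have hsum_u : ∀ q, (∑' p, EMetric.diam (u q p) ^ d) ≤ C * ε := by
        intro q
        rw [ENNReal.tsum_sigma']
        have hterm : ∀ n, (∑' k : Fin m → Fin (K q n), EMetric.diam (u q ⟨n, k⟩) ^ d)
            ≤ P ^ (m:ℝ) * Q ^ d * cc q n ^ (m':ℝ) := by
          intro n
          have hKle : (K q n : ℝ≥0∞) ≤ P / cc q n := by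
            have hreal : (K q n : ℝ) ≤ (2 * R + 2) / (cc q n).toReal := by
              have h1 : (⌈2 * R / (cc q n).toReal⌉₊ : ℝ) < 2 * R / (cc q n).toReal + 1 := by
                refine Nat.ceil_lt_add_one ?_
                positivity
              have h2 : (2:ℝ) ≤ 2 / (cc q n).toReal := by
                rw [le_div_iff₀ (hcrealpos q n)]
                nlinarith [hcrealle1 q n]
              have hKcast : (K q n : ℝ) = (⌈2 * R / (cc q n).toReal⌉₊ : ℝ) + 1 := by
                simp only [hKdef]
                push_cast
                ring
              have h4 : (2 * R + 2) / (cc q n).toReal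
                  = 2 * R / (cc q n).toReal + 2 / (cc q n).toReal := add_div _ _ _
              rw [hKcast, h4]
              linarith
            calc (K q n : ℝ≥0∞) = ENNReal.ofReal (K q n : ℝ) :=
                (ENNReal.ofReal_natCast _).symm
              _ ≤ ENNReal.ofReal ((2 * R + 2) / (cc q n).toReal) :=
                ENNReal.ofReal_le_ofReal hreal
              _ = P / cc q n := by
                rw [ENNReal.ofReal_div_of_pos (hcrealpos q n), hofReal q n]
          calc ∑' k : Fin m → Fin (K q n), EMetric.diam (u q ⟨n, k⟩) ^ d
              ≤ ∑' _k : Fin m → Fin (K q n), (cc q n * Q) ^ d :=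
                ENNReal.tsum_le_tsum fun k => ENNReal.rpow_le_rpow (hdiam_u q n k) hd0
            _ = (Fintype.card (Fin m → Fin (K q n)) : ℝ≥0∞) * (cc q n * Q) ^ d := by
                rw [tsum_fintype, Finset.sum_const, Finset.card_univ, nsmul_eq_mul]
            _ = ((K q n : ℝ≥0∞)) ^ (m : ℕ) * (cc q n * Q) ^ d := by
                rw [Fintype.card_fun, Fintype.card_fin, Fintype.card_fin, Nat.cast_pow]
            _ ≤ (P / cc q n) ^ (m : ℕ) * (cc q n * Q) ^ d :=
                mul_le_mul_left (pow_le_pow_left' hKle m) _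
            _ = (P / cc q n) ^ ((m : ℕ) : ℝ) * (cc q n * Q) ^ d := by
                rw [ENNReal.rpow_natCast]
            _ = P ^ (m:ℝ) * Q ^ d * cc q n ^ (m':ℝ) := by
                rw [hd]
                exact alg1 P Q (cc q n) (hcc0 q n) (hcctop q n) hQtop m m'
        have hccsum : (∑' n, cc q n ^ (m':ℝ)) ≤ 3 * ε := by
          have hpt : ∀ n, cc q n ^ (m':ℝ) ≤
              EMetric.diam (t q n) ^ (m':ℝ) + ε * 2⁻¹ ^ n := by
            intro n
            have hmin : γ q n ≤ (ε * 2⁻¹ ^ n) ^ (1/(m':ℝ)) := by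
              simp only [hγdef]
              exact min_le_left _ _
            have h5 : ((ε * 2⁻¹ ^ n) ^ (1/(m':ℝ))) ^ (m':ℝ) = ε * 2⁻¹ ^ n := by
              rw [← ENNReal.rpow_mul, one_div, inv_mul_cancel₀ hm'0.ne', ENNReal.rpow_one]
            have hγle : γ q n ^ (m':ℝ) ≤ ε * 2⁻¹ ^ n :=
              h5 ▸ ENNReal.rpow_le_rpow hmin (Nat.cast_nonneg m')
            rcases max_cases (EMetric.diam (t q n)) (γ q n) with ⟨hcase, _⟩ | ⟨hcase, _⟩
            · calc cc q n ^ (m':ℝ)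
                  = EMetric.diam (t q n) ^ (m':ℝ) := by
                    simp only [hccdef]; rw [hcase]
                _ ≤ _ := le_self_add
            · calc cc q n ^ (m':ℝ)
                  = γ q n ^ (m':ℝ) := by
                    simp only [hccdef]; rw [hcase]
                _ ≤ ε * 2⁻¹ ^ n := hγle
                _ ≤ _ := le_add_self
          calc (∑' n, cc q n ^ (m':ℝ))
              ≤ ∑' n, (EMetric.diam (t q n) ^ (m':ℝ) + ε * 2⁻¹ ^ n) :=
                ENNReal.tsum_le_tsum hpt
            _ = (∑' n, EMetric.diam (t q n) ^ (m':ℝ)) + ∑' n, ε * 2⁻¹ ^ n :=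
                ENNReal.tsum_add
            _ ≤ ε + ε * 2 := by
                refine add_le_add (hsum q).le ?_
                rw [ENNReal.tsum_mul_left, ENNReal.tsum_geometric,
                  ENNReal.one_sub_inv_two, inv_inv]
            _ = 3 * ε := by ring
        calc (∑' n, ∑' k : Fin m → Fin (K q n), EMetric.diam (u q ⟨n, k⟩) ^ d)
            ≤ ∑' n, P ^ (m:ℝ) * Q ^ d * cc q n ^ (m':ℝ) := ENNReal.tsum_le_tsum hterm
          _ = P ^ (m:ℝ) * Q ^ d * ∑' n, cc q n ^ (m':ℝ) := ENNReal.tsum_mul_left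
          _ ≤ P ^ (m:ℝ) * Q ^ d * (3 * ε) := mul_le_mul_right hccsum _
          _ = C * ε := by rw [hCdef]; ring
      calc μH[d] ((Metric.closedBall (0 : EuclideanSpace ℝ (Fin m)) R) ×ˢ (univ : Set X))
          ≤ Filter.atTop.liminf (fun q => ∑' p, EMetric.diam (u q p) ^ d) := by
            refine Measure.hausdorffMeasure_le_liminf_tsum d _
              (fun q => 2⁻¹ ^ q * Q) ?_ u ?_ ?_
            · have h0 : Filter.Tendsto (fun q : ℕ => (2⁻¹:ℝ≥0∞) ^ q)
                  Filter.atTop (𝓝 0) :=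
                ENNReal.tendsto_pow_atTop_nhds_zero_of_lt_one hhalflt1
              have h1 := ENNReal.Tendsto.mul_const h0 (Or.inr hQtop)
              simpa using h1
            · refine Filter.Eventually.of_forall fun q p => ?_
              exact (hdiam_u q p.1 p.2).trans (mul_le_mul_left (hccle q p.1) Q)
            · exact Filter.Eventually.of_forall hcover_u
        _ ≤ C * ε := Filter.liminf_le_of_frequently_le'
            (Filter.Frequently.of_forall hsum_u)
    have hlim : Filter.Tendsto (fun j : ℕ => C * 2⁻¹ ^ j) Filter.atTop (𝓝 0) := by
      have h0 : Filter.Tendsto (fun j : ℕ => (2⁻¹:ℝ≥0∞) ^ j) Filter.atTop (𝓝 0) :=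
        ENNReal.tendsto_pow_atTop_nhds_zero_of_lt_one hhalflt1
      have h1 := ENNReal.Tendsto.const_mul h0 (Or.inr hCtop)
      simpa using h1
    refine le_antisymm (ge_of_tendsto hlim (Filter.Eventually.of_forall fun j =>
      key2 (2⁻¹ ^ j) (pow_ne_zero j hhalf0) (ENNReal.pow_ne_top hhalftop))) zero_le
  -- conclude
  have hcover : (univ : Set (EuclideanSpace ℝ (Fin m) × X)) =
      ⋃ R : ℕ, (Metric.closedBall (0 : EuclideanSpace ℝ (Fin m)) R ×ˢ (univ : Set X)) := by
    ext p
    simp only [mem_univ, true_iff, mem_iUnion, Set.mem_prod, and_true,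
      Metric.mem_closedBall, dist_zero_right]
    exact ⟨⌈‖p.1‖⌉₊, Nat.le_ceil _⟩
  rw [hcover]
  refine le_antisymm ((measure_iUnion_le _).trans ?_) zero_le
  have h0 : ∀ R : ℕ, μH[d]
      (Metric.closedBall (0 : EuclideanSpace ℝ (Fin m)) (R:ℝ) ×ˢ (univ : Set X)) = 0 :=
    fun R => key R (Nat.cast_nonneg R)
  simp [h0]
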